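/- Let u, v be functions on ℝ^{d+1} (space-time) and suppose Γ_λ[v](ξ) := Σ a_{ij}(ξ) ∂_i v ∂_j v (ξ) + ∫_{|η−ξ|≤λ} (v(η)−v(ξ))² J(η,ξ) dη with A = (a_{ij}) uniformly elliptic with constant c: c^{-1}|ζ|² ≤ ζ·A(ξ)ζ ≤ c|ζ|². For ψ(ξ) = s(|ξ−x| ∧ |x−y|) (Lipschitz with constant s) and J(η,ξ) ≤ κ₀|η−ξ|^{−d−β} for |η−ξ| ≤ λ ≤ δ₀ with β ∈ (0,2), we have e^{−2ψ(ξ)} Γ_λ[e^ψ](ξ) ≤ C s² (1 + e^{2λs} δ(λ)) for all ξ, where δ(λ) := sup_ξ ∫_{|η−ξ|≤λ}|η−ξ|² J(η,ξ) dη and C depends only on c. -/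

import Mathlib

open MeasureTheory ENNReal

private lemma exp_sub_exp_le' (u v : ℝ) (h : v ≤ u) :
    Real.exp u - Real.exp v ≤ Real.exp u * (u - v) := by
  have key : Real.exp v = Real.exp (v - u) * Real.exp u := by
    rw [← Real.exp_add]; ring_nf
  nlinarith [Real.add_one_le_exp (v - u), Real.exp_pos u]

private lemma exp_sub_exp_le (u v : ℝ) :
    |Real.exp u - Real.exp v| ≤ Real.exp (max u v) * |u - v| := by
  rcases le_total v u with h | h
  · rw [max_eq_left h, abs_of_nonneg (sub_nonneg.2 (Real.exp_le_exp.2 h)),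
      abs_of_nonneg (sub_nonneg.2 h)]
    exact exp_sub_exp_le' u v h
  · rw [max_eq_right h, abs_sub_comm, abs_sub_comm u v,
      abs_of_nonneg (sub_nonneg.2 (Real.exp_le_exp.2 h)),
      abs_of_nonneg (sub_nonneg.2 h)]
    exact exp_sub_exp_le' v u h

private lemma psi_lip {d : ℕ} (s : ℝ) (hs : 0 < s) (x y a b : EuclideanSpace ℝ (Fin d)) :
    |s * min ‖a - x‖ ‖x - y‖ - s * min ‖b - x‖ ‖x - y‖| ≤ s * ‖a - b‖ := by
  rw [← mul_sub, abs_mul, abs_of_pos hs]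
  have h1 : |‖a - x‖ - ‖b - x‖| ≤ ‖a - b‖ := by
    simpa [sub_sub_sub_cancel_right] using abs_norm_sub_norm_le (a - x) (b - x)
  have h2 := abs_min_sub_min_le_max ‖a - x‖ ‖x - y‖ ‖b - x‖ ‖x - y‖
  simp only [sub_self, abs_zero] at h2
  have : |min ‖a - x‖ ‖x - y‖ - min ‖b - x‖ ‖x - y‖| ≤ ‖a - b‖ :=
    h2.trans (max_le h1 (norm_nonneg _))
  exact mul_le_mul_of_nonneg_left this hs.le

private lemma grad_bound {d : ℕ} (s : ℝ) (hs : 0 < s) (x y ξ : EuclideanSpace ℝ (Fin d)) :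
    ‖gradient (fun ζ => Real.exp (s * min ‖ζ - x‖ ‖x - y‖)) ξ‖ ≤
      Real.exp 1 * s * Real.exp (s * min ‖ξ - x‖ ‖x - y‖) := by
  have hnorm : ‖gradient (fun ζ => Real.exp (s * min ‖ζ - x‖ ‖x - y‖)) ξ‖ =
      ‖fderiv ℝ (fun ζ => Real.exp (s * min ‖ζ - x‖ ‖x - y‖)) ξ‖ := by
    simp [gradient]
  rw [hnorm]
  set ψ : EuclideanSpace ℝ (Fin d) → ℝ := fun ζ => s * min ‖ζ - x‖ ‖x - y‖ with hψ
  apply norm_fderiv_le_of_lip' ℝ (by positivity)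
  filter_upwards [Metric.ball_mem_nhds ξ (show (0:ℝ) < 1/s by positivity)] with η hη
  rw [Metric.mem_ball, dist_eq_norm] at hη
  have hlip := psi_lip s hs x y η ξ
  have hmax : max (ψ η) (ψ ξ) ≤ ψ ξ + 1 := by
    have h' : ψ η - ψ ξ ≤ s * ‖η - ξ‖ := (abs_sub_le_iff.1 hlip).1
    have hs1 : s * ‖η - ξ‖ ≤ 1 := by
      calc s * ‖η - ξ‖ ≤ s * (1/s) := by nlinarith
        _ = 1 := by field_simp
    exact max_le (by linarith) (by linarith)
  calc ‖Real.exp (ψ η) - Real.exp (ψ ξ)‖ ≤ Real.exp (max (ψ η) (ψ ξ)) * |ψ η - ψ ξ| :=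
        exp_sub_exp_le _ _
    _ ≤ Real.exp (ψ ξ + 1) * (s * ‖η - ξ‖) := by
        apply mul_le_mul (Real.exp_le_exp.2 hmax) hlip (abs_nonneg _) (Real.exp_pos _).le
    _ = Real.exp 1 * s * Real.exp (ψ ξ) * ‖η - ξ‖ := by
        rw [Real.exp_add]; ring

theorem stmt_17 (d : ℕ) (hd : 1 ≤ d) (c κ₀ β δ₀ : ℝ)
    (hc : 1 ≤ c) (hκ : 0 < κ₀) (hβ0 : 0 < β) (hβ2 : β < 2) (hδ₀ : 0 < δ₀) :
    ∃ C : ℝ, 0 < C ∧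
      ∀ (A : EuclideanSpace ℝ (Fin d) →
          EuclideanSpace ℝ (Fin d) →L[ℝ] EuclideanSpace ℝ (Fin d)),
        (∀ ξ ζ, c⁻¹ * ‖ζ‖ ^ 2 ≤ (inner ℝ (A ξ ζ) ζ : ℝ) ∧
          (inner ℝ (A ξ ζ) ζ : ℝ) ≤ c * ‖ζ‖ ^ 2) →
        ∀ J : EuclideanSpace ℝ (Fin d) → EuclideanSpace ℝ (Fin d) → ℝ≥0∞,
          Measurable (Function.uncurry J) →
          (∀ η ξ, dist η ξ ≤ δ₀ →
            J η ξ ≤ ENNReal.ofReal (κ₀ * ‖η - ξ‖ ^ (-((d : ℝ) + β)))) →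
          ∀ (s lam : ℝ) (x y : EuclideanSpace ℝ (Fin d)),
            0 < s → 0 < lam → lam ≤ δ₀ →
            ∀ ξ : EuclideanSpace ℝ (Fin d),
              ENNReal.ofReal (Real.exp (-2 * (s * min ‖ξ - x‖ ‖x - y‖))) *
                  (ENNReal.ofReal
                      ((inner ℝ
                        (A ξ (gradient
                          (fun ζ => Real.exp (s * min ‖ζ - x‖ ‖x - y‖)) ξ))
                        (gradient
                          (fun ζ => Real.exp (s * min ‖ζ - x‖ ‖x - y‖)) ξ) : ℝ))
                    + ∫⁻ η in Metric.closedBall ξ lam,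
                        ENNReal.ofReal
                          ((Real.exp (s * min ‖η - x‖ ‖x - y‖)
                            - Real.exp (s * min ‖ξ - x‖ ‖x - y‖)) ^ 2) * J η ξ)
                ≤ ENNReal.ofReal (C * s ^ 2) *
                    (1 + ENNReal.ofReal (Real.exp (2 * lam * s)) *
                      ⨆ ξ' : EuclideanSpace ℝ (Fin d),
                        ∫⁻ η in Metric.closedBall ξ' lam,
                          ENNReal.ofReal (‖η - ξ'‖ ^ 2) * J η ξ') := by
  refine ⟨Real.exp 2 * c, by positivity, ?_⟩
  intro A hA J hJmeas hJbound s lam x y hs hlam hlamδ ξ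
  have he2 : (1:ℝ) ≤ Real.exp 2 := Real.one_le_exp (by norm_num)
  set g := gradient (fun ζ => Real.exp (s * min ‖ζ - x‖ ‖x - y‖)) ξ with hg_def
  set ψξ := s * min ‖ξ - x‖ ‖x - y‖ with hψξ
  -- real bound for the gradient term
  have hg : ‖g‖ ≤ Real.exp 1 * s * Real.exp ψξ := grad_bound s hs x y ξ
  have h1 : Real.exp (-2 * ψξ) * (inner ℝ (A ξ g) g : ℝ) ≤ Real.exp 2 * c * s ^ 2 := by
    have hAb := (hA ξ g).2
    have hg2 : ‖g‖ ^ 2 ≤ (Real.exp 1 * s * Real.exp ψξ) ^ 2 :=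
      pow_le_pow_left₀ (norm_nonneg g) hg 2
    have hc0 : (0:ℝ) < c := lt_of_lt_of_le one_pos hc
    have step : (inner ℝ (A ξ g) g : ℝ) ≤ c * (Real.exp 1 * s * Real.exp ψξ) ^ 2 :=
      hAb.trans (by nlinarith)
    have e2 : Real.exp 1 ^ 2 = Real.exp 2 := by
      rw [sq, ← Real.exp_add]; norm_num
    have ep2 : Real.exp (-2 * ψξ) * Real.exp ψξ ^ 2 = 1 := by
      rw [sq, ← Real.exp_add, ← Real.exp_add,
        show -2 * ψξ + (ψξ + ψξ) = (0:ℝ) by ring, Real.exp_zero]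
    calc Real.exp (-2 * ψξ) * (inner ℝ (A ξ g) g : ℝ)
        ≤ Real.exp (-2 * ψξ) * (c * (Real.exp 1 * s * Real.exp ψξ) ^ 2) :=
          mul_le_mul_of_nonneg_left step (Real.exp_pos _).le
      _ = Real.exp 1 ^ 2 * (Real.exp (-2 * ψξ) * Real.exp ψξ ^ 2) * c * s ^ 2 := by ring
      _ = Real.exp 2 * c * s ^ 2 := by rw [ep2, e2]; ring
  -- pointwise real bound for the jump term
  have h2 : ∀ η ∈ Metric.closedBall ξ lam,
      Real.exp (-2 * ψξ) *
        (Real.exp (s * min ‖η - x‖ ‖x - y‖) - Real.exp ψξ) ^ 2 ≤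
      Real.exp (2 * lam * s) * s ^ 2 * ‖η - ξ‖ ^ 2 := by
    intro η hη
    rw [Metric.mem_closedBall, dist_eq_norm] at hη
    set ψη := s * min ‖η - x‖ ‖x - y‖ with hψη
    have hlip : |ψη - ψξ| ≤ s * ‖η - ξ‖ := psi_lip s hs x y η ξ
    have hmax : max ψη ψξ ≤ ψξ + s * lam := by
      have h' : ψη - ψξ ≤ s * ‖η - ξ‖ := (abs_sub_le_iff.1 hlip).1
      have : s * ‖η - ξ‖ ≤ s * lam := mul_le_mul_of_nonneg_left hη hs.le
      exact max_le (by linarith) (by nlinarith)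
    have habs : |Real.exp ψη - Real.exp ψξ| ≤ Real.exp (ψξ + s * lam) * (s * ‖η - ξ‖) := by
      calc |Real.exp ψη - Real.exp ψξ| ≤ Real.exp (max ψη ψξ) * |ψη - ψξ| :=
            exp_sub_exp_le _ _
        _ ≤ Real.exp (ψξ + s * lam) * (s * ‖η - ξ‖) :=
            mul_le_mul (Real.exp_le_exp.2 hmax) hlip (abs_nonneg _) (Real.exp_pos _).le
    have hsq : (Real.exp ψη - Real.exp ψξ) ^ 2 ≤
        Real.exp (ψξ + s * lam) ^ 2 * (s * ‖η - ξ‖) ^ 2 := by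
      calc (Real.exp ψη - Real.exp ψξ) ^ 2 = |Real.exp ψη - Real.exp ψξ| ^ 2 :=
            (sq_abs _).symm
        _ ≤ (Real.exp (ψξ + s * lam) * (s * ‖η - ξ‖)) ^ 2 :=
            pow_le_pow_left₀ (abs_nonneg _) habs 2
        _ = Real.exp (ψξ + s * lam) ^ 2 * (s * ‖η - ξ‖) ^ 2 := by ring
    have eid : Real.exp (-2 * ψξ) * Real.exp (ψξ + s * lam) ^ 2 = Real.exp (2 * lam * s) := by
      rw [sq, ← Real.exp_add, ← Real.exp_add]
      congr 1; ring
    calc Real.exp (-2 * ψξ) * (Real.exp ψη - Real.exp ψξ) ^ 2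
        ≤ Real.exp (-2 * ψξ) * (Real.exp (ψξ + s * lam) ^ 2 * (s * ‖η - ξ‖) ^ 2) :=
          mul_le_mul_of_nonneg_left hsq (Real.exp_pos _).le
      _ = Real.exp (-2 * ψξ) * Real.exp (ψξ + s * lam) ^ 2 * (s * ‖η - ξ‖) ^ 2 := by ring
      _ = Real.exp (2 * lam * s) * s ^ 2 * ‖η - ξ‖ ^ 2 := by rw [eid]; ring
  -- ENNReal part
  set S := ⨆ ξ' : EuclideanSpace ℝ (Fin d),
      ∫⁻ η in Metric.closedBall ξ' lam, ENNReal.ofReal (‖η - ξ'‖ ^ 2) * J η ξ' with hS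
  have hA1 : ENNReal.ofReal (Real.exp (-2 * ψξ)) *
      ENNReal.ofReal ((inner ℝ (A ξ g) g : ℝ)) ≤ ENNReal.ofReal (Real.exp 2 * c * s ^ 2) := by
    rw [← ENNReal.ofReal_mul (Real.exp_pos _).le]
    exact ENNReal.ofReal_le_ofReal h1
  have hA2 : ENNReal.ofReal (Real.exp (-2 * ψξ)) *
      ∫⁻ η in Metric.closedBall ξ lam,
        ENNReal.ofReal ((Real.exp (s * min ‖η - x‖ ‖x - y‖) - Real.exp ψξ) ^ 2) * J η ξ
      ≤ ENNReal.ofReal (Real.exp 2 * c * s ^ 2) *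
        (ENNReal.ofReal (Real.exp (2 * lam * s)) * S) := by
    calc ENNReal.ofReal (Real.exp (-2 * ψξ)) *
        ∫⁻ η in Metric.closedBall ξ lam,
          ENNReal.ofReal ((Real.exp (s * min ‖η - x‖ ‖x - y‖) - Real.exp ψξ) ^ 2) * J η ξ
        = ∫⁻ η in Metric.closedBall ξ lam, ENNReal.ofReal (Real.exp (-2 * ψξ)) *
            (ENNReal.ofReal ((Real.exp (s * min ‖η - x‖ ‖x - y‖) - Real.exp ψξ) ^ 2) * J η ξ) :=
          (lintegral_const_mul' _ _ ENNReal.ofReal_ne_top).symm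
      _ ≤ ∫⁻ η in Metric.closedBall ξ lam,
            ENNReal.ofReal (Real.exp (2 * lam * s) * s ^ 2) *
              (ENNReal.ofReal (‖η - ξ‖ ^ 2) * J η ξ) := by
          apply setLIntegral_mono' measurableSet_closedBall
          intro η hη
          calc ENNReal.ofReal (Real.exp (-2 * ψξ)) *
              (ENNReal.ofReal ((Real.exp (s * min ‖η - x‖ ‖x - y‖) - Real.exp ψξ) ^ 2) * J η ξ)
              = ENNReal.ofReal (Real.exp (-2 * ψξ) *
                  (Real.exp (s * min ‖η - x‖ ‖x - y‖) - Real.exp ψξ) ^ 2) * J η ξ := by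
                rw [← mul_assoc, ← ENNReal.ofReal_mul (Real.exp_pos _).le]
            _ ≤ ENNReal.ofReal (Real.exp (2 * lam * s) * s ^ 2 * ‖η - ξ‖ ^ 2) * J η ξ :=
                mul_le_mul_left (ENNReal.ofReal_le_ofReal (h2 η hη)) _
            _ = ENNReal.ofReal (Real.exp (2 * lam * s) * s ^ 2) *
                  (ENNReal.ofReal (‖η - ξ‖ ^ 2) * J η ξ) := by
                rw [← mul_assoc, ← ENNReal.ofReal_mul (by positivity)]
      _ = ENNReal.ofReal (Real.exp (2 * lam * s) * s ^ 2) *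
            ∫⁻ η in Metric.closedBall ξ lam, ENNReal.ofReal (‖η - ξ‖ ^ 2) * J η ξ :=
          lintegral_const_mul' _ _ ENNReal.ofReal_ne_top
      _ ≤ ENNReal.ofReal (Real.exp (2 * lam * s) * s ^ 2) * S :=
          mul_le_mul_right (le_iSup (fun ξ' => ∫⁻ η in Metric.closedBall ξ' lam,
            ENNReal.ofReal (‖η - ξ'‖ ^ 2) * J η ξ') ξ) _
      _ = ENNReal.ofReal (s ^ 2) * (ENNReal.ofReal (Real.exp (2 * lam * s)) * S) := by
          rw [← mul_assoc, ← ENNReal.ofReal_mul (by positivity),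
            mul_comm (s ^ 2) (Real.exp (2 * lam * s))]
      _ ≤ ENNReal.ofReal (Real.exp 2 * c * s ^ 2) *
            (ENNReal.ofReal (Real.exp (2 * lam * s)) * S) := by
          apply mul_le_mul_left
          apply ENNReal.ofReal_le_ofReal
          have h1c : (1:ℝ) ≤ Real.exp 2 * c := by nlinarith
          nlinarith [sq_nonneg s, mul_le_mul_of_nonneg_left h1c (sq_nonneg s)]
  calc ENNReal.ofReal (Real.exp (-2 * ψξ)) *
      (ENNReal.ofReal ((inner ℝ (A ξ g) g : ℝ))
        + ∫⁻ η in Metric.closedBall ξ lam,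
            ENNReal.ofReal ((Real.exp (s * min ‖η - x‖ ‖x - y‖) - Real.exp ψξ) ^ 2) * J η ξ)
      = ENNReal.ofReal (Real.exp (-2 * ψξ)) * ENNReal.ofReal ((inner ℝ (A ξ g) g : ℝ))
        + ENNReal.ofReal (Real.exp (-2 * ψξ)) *
          ∫⁻ η in Metric.closedBall ξ lam,
            ENNReal.ofReal ((Real.exp (s * min ‖η - x‖ ‖x - y‖) - Real.exp ψξ) ^ 2) * J η ξ :=
        mul_add _ _ _
    _ ≤ ENNReal.ofReal (Real.exp 2 * c * s ^ 2) +
          ENNReal.ofReal (Real.exp 2 * c * s ^ 2) *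
            (ENNReal.ofReal (Real.exp (2 * lam * s)) * S) := add_le_add hA1 hA2
    _ = ENNReal.ofReal (Real.exp 2 * c * s ^ 2) *
          (1 + ENNReal.ofReal (Real.exp (2 * lam * s)) * S) := by rw [mul_add, mul_one]
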